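/- For each k ≥ 2, the pair α_L = (-1)^L a^{kL} q^{kL² + L(L-1)/2} (1 - a q^{2L}) (a;q)_L / ((1-a)(q;q)_L) and β_L = Σ_{L ≥ n₁ ≥ ⋯ ≥ n_{k-1} ≥ 0} a^{n₁+⋯+n_{k-1}} q^{n₁²+⋯+n_{k-1}²} / ((q;q)_{L-n₁} (q;q)_{n₁-n₂} ⋯ (q;q)_{n_{k-1}}) is a Bailey pair relative to a. -/

import Mathlib

/-- Finite q-shifted factorial `(x;q)_n`. -/
noncomputable def qp (q x : ℂ) (n : ℕ) : ℂ := ∏ k ∈ Finset.range n, (1 - x * q ^ k)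

/-- Extend a tuple `n : Fin m → ℕ` by zero. -/
def ext {m : ℕ} (n : Fin m → ℕ) (i : ℕ) : ℕ := if h : i < m then n ⟨i, h⟩ else 0


lemma qp_succ (q x : ℂ) (n : ℕ) : qp q x (n + 1) = qp q x n * (1 - x * q ^ n) :=
  Finset.prod_range_succ _ _

lemma qp_succ' (q x : ℂ) (n : ℕ) : qp q x (n + 1) = (1 - x) * qp q (x * q) n := by
  unfold qp
  rw [Finset.prod_range_succ']
  simp only [pow_zero, mul_one, pow_succ]
  rw [mul_comm]
  congr 1
  apply Finset.prod_congr rfl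
  intro i _
  ring_nf

lemma qp_add (q x : ℂ) (m n : ℕ) : qp q x (m + n) = qp q x m * qp q (x * q ^ m) n := by
  unfold qp
  rw [Finset.prod_range_add]
  congr 1
  apply Finset.prod_congr rfl
  intro i _
  rw [pow_add]
  ring

section

variable {q a : ℂ}

lemma pow_ne_one (hq1 : ‖q‖ < 1) (n : ℕ) (hn : 1 ≤ n) : q ^ n ≠ 1 := by
  intro h
  have : ‖q ^ n‖ < 1 := by
    rw [norm_pow]
    exact pow_lt_one₀ (norm_nonneg q) hq1 (by omega)
  rw [h, norm_one] at this
  exact lt_irrefl _ this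

lemma qp_q_ne_zero (hq1 : ‖q‖ < 1) (n : ℕ) : qp q q n ≠ 0 := by
  unfold qp
  rw [Finset.prod_ne_zero_iff]
  intro i _
  have : q * q ^ i = q ^ (i + 1) := by ring
  rw [this]
  exact sub_ne_zero.mpr (Ne.symm (pow_ne_one hq1 (i + 1) (by omega)))

lemma one_sub_qpow_ne (hq1 : ‖q‖ < 1) (n : ℕ) (hn : 1 ≤ n) : (1 : ℂ) - q ^ n ≠ 0 :=
  sub_ne_zero.mpr (Ne.symm (pow_ne_one hq1 n hn))

lemma one_sub_aq_ne (haq : ∀ n, qp q (a * q) n ≠ 0) (j : ℕ) :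
    (1 : ℂ) - a * q ^ (j + 1) ≠ 0 := by
  have h := haq (j + 1)
  unfold qp at h
  rw [Finset.prod_ne_zero_iff] at h
  have := h j (Finset.mem_range.mpr (by omega))
  have e : a * q * q ^ j = a * q ^ (j + 1) := by ring
  rwa [e] at this

lemma qp_shift_ne_zero (haq : ∀ n, qp q (a * q) n ≠ 0) (c : ℕ) (n : ℕ) :
    qp q (a * q ^ (c + 1)) n ≠ 0 := by
  unfold qp
  rw [Finset.prod_ne_zero_iff]
  intro i _
  have e : a * q ^ (c + 1) * q ^ i = a * q ^ (c + i + 1) := by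
    rw [show c + i + 1 = (c+1) + i by omega, pow_add]; ring
  rw [e]
  exact one_sub_aq_ne haq (c + i)

end
section
variable {q a b : ℂ}

lemma qp_b_ne_zero (hb : ∀ j : ℕ, (1:ℂ) - b * q ^ (j+1) ≠ 0) (n : ℕ) :
    qp q (b * q) n ≠ 0 := by
  unfold qp
  rw [Finset.prod_ne_zero_iff]
  intro i _
  have e : b * q * q ^ i = b * q ^ (i + 1) := by rw [pow_succ]; ring
  rw [e]
  exact hb i

lemma hb_shift (hb : ∀ j : ℕ, (1:ℂ) - b * q ^ (j+1) ≠ 0) :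
    ∀ j : ℕ, (1:ℂ) - (b * q) * q ^ (j+1) ≠ 0 := by
  intro j
  have := hb (j + 1)
  have e : b * q * q ^ (j+1) = b * q ^ (j + 1 + 1) := by rw [pow_succ]; ring
  rw [e]
  exact this

lemma durfee (hq1 : ‖q‖ < 1) :
    ∀ (M : ℕ) (b : ℂ), (∀ j : ℕ, (1:ℂ) - b * q ^ (j+1) ≠ 0) →
    ∑ m ∈ Finset.range (M+1),
        q ^ (m^2) * b ^ m / (qp q q (M - m) * qp q q m * qp q (b*q) m)
      = 1 / (qp q q M * qp q (b*q) M) := by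
  intro M
  induction M with
  | zero =>
    intro b hb
    simp [qp]
  | succ M ih =>
    intro b hb
    have hbq := hb_shift hb
    have h1bq : (1:ℂ) - b * q ≠ 0 := by have := hb 0; rwa [pow_one] at this
    have hu : (1:ℂ) - q ^ (M+1) ≠ 0 := one_sub_qpow_ne hq1 (M+1) (by omega)
    have hv : (1:ℂ) - b * q ^ (M+1) ≠ 0 := hb M
    -- pointwise split
    have key : ∀ m ∈ Finset.range (M+2),
        q ^ (m^2) * b ^ m / (qp q q (M + 1 - m) * qp q q m * qp q (b*q) m)
        = (if m ≤ M then
            q ^ (m^2) * b ^ m / (qp q q (M - m) * qp q q m * qp q (b*q) m * (1 - q^(M+1)))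
           else 0)
          + (if 1 ≤ m then
            q ^ (M+1-m) * (q ^ (m^2) * b ^ m) /
              (qp q q (M+1-m) * qp q q (m-1) * qp q (b*q) m * (1 - q^(M+1)))
           else 0) := by
      intro m hm
      rw [Finset.mem_range] at hm
      match m with
      | 0 =>
        simp only [if_pos (Nat.zero_le M), if_neg (by omega : ¬ 1 ≤ 0)]
        rw [Nat.sub_zero, Nat.sub_zero, qp_succ]
        have e : q * q ^ M = q ^ (M+1) := by rw [pow_succ]; ring
        rw [e]
        simp only [qp, Finset.range_zero, Finset.prod_empty, pow_zero, one_mul, mul_one, add_zero]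
      | (j+1) =>
        by_cases hjm : j + 1 ≤ M
        · rw [if_pos hjm, if_pos (by omega : 1 ≤ j + 1)]
          obtain ⟨s, hs⟩ : ∃ s, M - (j+1) = s := ⟨M - (j+1), rfl⟩
          have h1 : M + 1 - (j+1) = s + 1 := by omega
          have h3 : j + 1 - 1 = j := by omega
          rw [h1, hs, h3, qp_succ q q s, qp_succ q q j]
          have e1 : q * q ^ s = q ^ (s+1) := by rw [pow_succ]; ring
          have e2 : q * q ^ j = q ^ (j+1) := by rw [pow_succ]; ring
          have e3 : q ^ (M+1) = q ^ (s+1) * q ^ (j+1) := by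
            rw [← pow_add]; congr 1; omega
          rw [e1, e2, e3]
          have hs1 : (1:ℂ) - q ^ (s+1) ≠ 0 := one_sub_qpow_ne hq1 _ (by omega)
          have hj1 : (1:ℂ) - q ^ (j+1) ≠ 0 := one_sub_qpow_ne hq1 _ (by omega)
          have hps : qp q q s ≠ 0 := qp_q_ne_zero hq1 s
          have hpj : qp q q j ≠ 0 := qp_q_ne_zero hq1 j
          have hpb : qp q (b*q) (j+1) ≠ 0 := qp_b_ne_zero hb (j+1)
          have hu' : (1:ℂ) - q ^ (s+1) * q ^ (j+1) ≠ 0 := by rw [← e3]; exact hu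
          have hd0 : qp q q s * (1 - q ^ (s+1)) * (qp q q j * (1 - q ^ (j+1))) *
              qp q (b*q) (j+1) ≠ 0 :=
            mul_ne_zero (mul_ne_zero (mul_ne_zero hps hs1) (mul_ne_zero hpj hj1)) hpb
          have hd1 : qp q q s * (qp q q j * (1 - q ^ (j+1))) * qp q (b*q) (j+1) *
              (1 - q ^ (s+1) * q ^ (j+1)) ≠ 0 :=
            mul_ne_zero (mul_ne_zero (mul_ne_zero hps (mul_ne_zero hpj hj1)) hpb) hu'
          have hd2 : qp q q s * (1 - q ^ (s+1)) * qp q q j * qp q (b*q) (j+1) *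
              (1 - q ^ (s+1) * q ^ (j+1)) ≠ 0 :=
            mul_ne_zero (mul_ne_zero (mul_ne_zero (mul_ne_zero hps hs1) hpj) hpb) hu'
          rw [div_add_div _ _ hd1 hd2, div_eq_div_iff hd0 (mul_ne_zero hd1 hd2)]
          ring
        · have hj : j = M := by omega
          rw [hj]
          rw [if_neg (by omega : ¬ M + 1 ≤ M), if_pos (by omega : 1 ≤ M + 1)]
          rw [Nat.sub_self, Nat.add_sub_cancel]
          simp only [qp, Finset.range_zero, Finset.prod_empty, pow_zero, one_mul, zero_add]
          rw [show (∏ k ∈ Finset.range (M+1), (1 - q * q ^ k)) = qp q q (M+1) from rfl,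
              qp_succ q q M]
          have e : q * q ^ M = q ^ (M+1) := by rw [pow_succ]; ring
          rw [e]
          rw [show (∏ k ∈ Finset.range M, (1 - q * q ^ k)) = qp q q M from rfl]
          congr 1
          ring
    rw [Finset.sum_congr rfl key, Finset.sum_add_distrib]
    -- first sum
    have sumA : (∑ m ∈ Finset.range (M+2),
        if m ≤ M then
          q ^ (m^2) * b ^ m / (qp q q (M - m) * qp q q m * qp q (b*q) m * (1 - q^(M+1)))
        else 0)
        = (1 / (qp q q M * qp q (b*q) M)) / (1 - q^(M+1)) := by
      rw [Finset.sum_range_succ, if_neg (by omega : ¬ M + 1 ≤ M), add_zero]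
      have hc : ∀ m ∈ Finset.range (M+1),
          (if m ≤ M then
            q ^ (m^2) * b ^ m / (qp q q (M - m) * qp q q m * qp q (b*q) m * (1 - q^(M+1)))
          else 0)
          = (q ^ (m^2) * b ^ m / (qp q q (M - m) * qp q q m * qp q (b*q) m)) / (1 - q^(M+1)) := by
        intro m hm
        rw [Finset.mem_range] at hm
        rw [if_pos (by omega : m ≤ M), div_div]
      rw [Finset.sum_congr rfl hc, ← Finset.sum_div, ih b hb]
    -- second sum
    have sumB : (∑ m ∈ Finset.range (M+2),
        if 1 ≤ m then
          q ^ (M+1-m) * (q ^ (m^2) * b ^ m) /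
            (qp q q (M+1-m) * qp q q (m-1) * qp q (b*q) m * (1 - q^(M+1)))
        else 0)
        = (b * q^(M+1) / ((1 - b*q) * (1 - q^(M+1)))) *
            (1 / (qp q q M * qp q ((b*q)*q) M)) := by
      rw [Finset.sum_range_succ']
      rw [if_neg (by omega : ¬ (1:ℕ) ≤ 0), add_zero]
      have step : ∀ j ∈ Finset.range (M+1),
          (if 1 ≤ j + 1 then
            q ^ (M+1-(j+1)) * (q ^ ((j+1)^2) * b ^ (j+1)) /
              (qp q q (M+1-(j+1)) * qp q q ((j+1)-1) * qp q (b*q) (j+1) * (1 - q^(M+1)))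
          else 0)
          = (b * q^(M+1) / ((1 - b*q) * (1 - q^(M+1)))) *
              (q ^ (j^2) * (b*q) ^ j / (qp q q (M - j) * qp q q j * qp q ((b*q)*q) j)) := by
        intro j hj
        rw [Finset.mem_range] at hj
        rw [if_pos (by omega : 1 ≤ j + 1)]
        have h1 : M + 1 - (j+1) = M - j := by omega
        have h2 : j + 1 - 1 = j := by omega
        rw [h1, h2, qp_succ' q (b*q) j]
        have enum : q ^ (M-j) * (q ^ ((j+1)^2) * b ^ (j+1))
            = b * q^(M+1) * (q ^ (j^2) * (b*q)^j) := by
          obtain ⟨d, hd⟩ : ∃ d, M = j + d := ⟨M - j, by omega⟩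
          subst hd
          rw [show j + d - j = d by omega]
          rw [show (j+1)^2 = j^2 + (j + j + 1) by ring]
          simp only [pow_add, pow_succ, pow_zero, one_mul, mul_pow, pow_one]
          ring
        rw [div_mul_div_comm, ← enum]
        congr 1
        ring
      rw [Finset.sum_congr rfl step, ← Finset.mul_sum, ih (b*q) hbq]
    rw [sumA, sumB]
    -- final identity
    have hpM : qp q q M ≠ 0 := qp_q_ne_zero hq1 M
    have hpb : qp q (b*q) M ≠ 0 := qp_b_ne_zero hb M
    have hpb2 : qp q ((b*q)*q) M ≠ 0 := qp_b_ne_zero hbq M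
    have hqq1 : qp q q (M+1) = qp q q M * (1 - q^(M+1)) := by rw [qp_succ]; ring
    have hbb1 : qp q (b*q) (M+1) = qp q (b*q) M * (1 - b * q^(M+1)) := by rw [qp_succ]; ring
    have hR' : (1 - b*q) * qp q ((b*q)*q) M = qp q (b*q) M * (1 - b * q^(M+1)) := by
      rw [← qp_succ', qp_succ]; ring
    rw [hqq1, hbb1]
    have lhs2 : (b * q^(M+1) / ((1 - b*q) * (1 - q^(M+1)))) *
          (1 / (qp q q M * qp q ((b*q)*q) M))
        = b * q^(M+1) /
            ((1 - q^(M+1)) * (qp q q M * (qp q (b*q) M * (1 - b * q^(M+1))))) := by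
      rw [div_mul_div_comm, mul_one]
      congr 1
      rw [← hR']
      ring
    rw [lhs2, div_div]
    have h1 : qp q q M * qp q (b*q) M * (1 - q^(M+1)) ≠ 0 :=
      mul_ne_zero (mul_ne_zero hpM hpb) hu
    have h2 : (1 - q^(M+1)) * (qp q q M * (qp q (b*q) M * (1 - b * q^(M+1)))) ≠ 0 :=
      mul_ne_zero hu (mul_ne_zero hpM (mul_ne_zero hpb hv))
    have h3 : qp q q M * (1 - q^(M+1)) * (qp q (b*q) M * (1 - b * q^(M+1))) ≠ 0 :=
      mul_ne_zero (mul_ne_zero hpM hu) (mul_ne_zero hpb hv)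
    rw [div_add_div _ _ h1 h2, div_eq_div_iff (mul_ne_zero h1 h2) h3]
    ring

end
noncomputable def alp (q a : ℂ) (k r : ℕ) : ℂ :=
  (-1) ^ r * a ^ (k * r) * q ^ (k * r ^ 2 + r * (r - 1) / 2) *
    (1 - a * q ^ (2 * r)) * qp q a r / ((1 - a) * qp q q r)

noncomputable def bet (q a : ℂ) : ℕ → ℕ → ℂ
  | 0, L => if L = 0 then 1 else 0
  | (k+1), L => ∑ n ∈ Finset.range (L+1), a ^ n * q ^ (n^2) * bet q a k n / qp q q (L - n)

lemma tri (r : ℕ) : (r+1) * ((r+1) - 1) / 2 = r * (r - 1) / 2 + r := by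
  rw [← Finset.sum_range_id, ← Finset.sum_range_id, Finset.sum_range_succ]

section
variable {q a : ℂ}

lemma durfee' (hq1 : ‖q‖ < 1) (haq : ∀ n, qp q (a * q) n ≠ 0) (r M : ℕ) :
    ∑ m ∈ Finset.range (M+1),
        a ^ (r+m) * q ^ ((r+m)^2) / (qp q q (M - m) * qp q q m * qp q (a*q) (2*r + m))
      = a ^ r * q ^ (r^2) / (qp q q M * qp q (a*q) (2*r + M)) := by
  have hb : ∀ j : ℕ, (1:ℂ) - (a * q ^ (2*r)) * q ^ (j+1) ≠ 0 := by
    intro j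
    have h := one_sub_aq_ne haq (2*r + j)
    have e : a * q ^ (2*r) * q ^ (j+1) = a * q ^ (2*r + j + 1) := by
      rw [show 2*r + j + 1 = 2*r + (j+1) by omega, pow_add]; ring
    rw [e]; exact h
  have hsplit : ∀ m : ℕ, qp q (a*q) (2*r + m)
      = qp q (a*q) (2*r) * qp q ((a * q ^ (2*r)) * q) m := by
    intro m
    rw [qp_add]
    congr 2
    ring
  have h2r : qp q (a*q) (2*r) ≠ 0 := by
    have := haq (2*r)
    exact this
  have key : ∀ m ∈ Finset.range (M+1),
      a ^ (r+m) * q ^ ((r+m)^2) / (qp q q (M - m) * qp q q m * qp q (a*q) (2*r + m))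
      = (a ^ r * q ^ (r^2) / qp q (a*q) (2*r)) *
          (q ^ (m^2) * (a * q ^ (2*r)) ^ m /
            (qp q q (M - m) * qp q q m * qp q ((a * q ^ (2*r)) * q) m)) := by
    intro m _
    rw [hsplit m]
    have enum : a ^ (r+m) * q ^ ((r+m)^2)
        = a ^ r * q ^ (r^2) * (q ^ (m^2) * (a * q ^ (2*r)) ^ m) := by
      rw [show (r+m)^2 = r^2 + (m^2 + 2*r*m) by ring, pow_add, pow_add, pow_add, pow_mul,
        mul_pow, pow_mul]
      ring
    rw [div_mul_div_comm, ← enum]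
    congr 1
    ring
  rw [Finset.sum_congr rfl key, ← Finset.mul_sum, durfee hq1 M _ hb, hsplit M]
  rw [div_mul_div_comm, mul_one]
  congr 1
  ring

lemma unit_bp (hq1 : ‖q‖ < 1) (ha : a ≠ 1) (haq : ∀ n, qp q (a * q) n ≠ 0) (L : ℕ) :
    ∑ r ∈ Finset.range (L+1), alp q a 0 r / (qp q q (L - r) * qp q (a*q) (L + r))
      = if L = 0 then 1 else 0 := by
  have ha' : (1:ℂ) - a ≠ 0 := sub_ne_zero.mpr (Ne.symm ha)
  rcases Nat.eq_zero_or_pos L with hL | hL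
  · subst hL
    simp [alp, qp, ha']
  · rw [if_neg (by omega : ¬ L = 0)]
    have h1qL : (1:ℂ) - q ^ L ≠ 0 := one_sub_qpow_ne hq1 L (by omega)
    set w : ℕ → ℂ := fun r =>
      if r ≤ L then
        (-1)^r * q^(r*(r-1)/2) * qp q a r * (1 - a * q^(L+r)) * (1 - q^r) /
          ((1-a) * (1 - q^L) * qp q q r * qp q q (L-r) * qp q (a*q) (L+r))
      else 0 with hw
    have claim : ∀ r ∈ Finset.range (L+1),
        alp q a 0 r / (qp q q (L - r) * qp q (a*q) (L + r)) = w r - w (r+1) := by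
      intro r hr
      rw [Finset.mem_range] at hr
      by_cases hrL : r = L
      · subst hrL
        rw [hw]
        simp only [if_pos (le_refl r), if_neg (by omega : ¬ r + 1 ≤ r)]
        rw [sub_zero, Nat.sub_self, show qp q q 0 = (1:ℂ) from Finset.prod_range_zero _, one_mul]
        simp only [alp, Nat.zero_mul, pow_zero, Nat.zero_add, zero_mul, zero_add, one_mul]
        rw [div_div]
        have h1qr : (1:ℂ) - q ^ r ≠ 0 := one_sub_qpow_ne hq1 r (by omega)
        have hqr : qp q q r ≠ 0 := qp_q_ne_zero hq1 r
        have hA : qp q (a*q) (r+r) ≠ 0 := haq _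
        have hdl : (1-a) * qp q q r * qp q (a*q) (r+r) ≠ 0 :=
          mul_ne_zero (mul_ne_zero ha' hqr) hA
        have hdr : (1-a) * (1 - q^r) * qp q q r * 1 * qp q (a*q) (r+r) ≠ 0 :=
          mul_ne_zero (mul_ne_zero (mul_ne_zero (mul_ne_zero ha' h1qr) hqr) one_ne_zero) hA
        rw [div_eq_div_iff hdl hdr]
        ring
      · obtain ⟨s, rfl⟩ : ∃ s, L = r + s + 1 := ⟨L - r - 1, by omega⟩
        rw [hw]
        simp only [if_pos (by omega : r ≤ r + s + 1), if_pos (by omega : r + 1 ≤ r + s + 1)]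
        rw [show r + s + 1 - r = s + 1 by omega, show r + s + 1 - (r+1) = s by omega,
          show r + s + 1 + (r + 1) = (r + s + 1 + r) + 1 by omega]
        rw [tri r, pow_add, qp_succ q a r, qp_succ q q r, qp_succ q (a*q) (r+s+1+r),
          qp_succ q q s]
        simp only [alp, Nat.zero_mul, pow_zero, Nat.zero_add, zero_mul, zero_add, one_mul]
        rw [div_div]
        have hqr : qp q q r ≠ 0 := qp_q_ne_zero hq1 r
        have hqs : qp q q s ≠ 0 := qp_q_ne_zero hq1 s
        have hA : qp q (a*q) (r+s+1+r) ≠ 0 := haq _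
        have hqs1 : (1:ℂ) - q * q^s ≠ 0 := by
          rw [show q * q^s = q^(s+1) from by rw [pow_succ]; ring]
          exact one_sub_qpow_ne hq1 _ (by omega)
        have hqr1 : (1:ℂ) - q * q^r ≠ 0 := by
          rw [show q * q^r = q^(r+1) from by rw [pow_succ]; ring]
          exact one_sub_qpow_ne hq1 _ (by omega)
        have hA1 : (1:ℂ) - a * q * q^(r+s+1+r) ≠ 0 := by
          rw [show a * q * q^(r+s+1+r) = a * q^(r+s+1+r+1) from by rw [pow_succ]; ring]
          exact one_sub_aq_ne haq _
        have hD0 : (1-a) * qp q q r * (qp q q s * (1 - q * q^s) * qp q (a*q) (r+s+1+r)) ≠ 0 :=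
          mul_ne_zero (mul_ne_zero ha' hqr)
            (mul_ne_zero (mul_ne_zero hqs hqs1) hA)
        have hD1 : (1-a) * (1 - q^(r+s+1)) * qp q q r * (qp q q s * (1 - q * q^s)) *
            qp q (a*q) (r+s+1+r) ≠ 0 :=
          mul_ne_zero (mul_ne_zero (mul_ne_zero (mul_ne_zero ha' h1qL) hqr)
            (mul_ne_zero hqs hqs1)) hA
        have hD2 : (1-a) * (1 - q^(r+s+1)) * (qp q q r * (1 - q * q^r)) * qp q q s *
            (qp q (a*q) (r+s+1+r) * (1 - a * q * q^(r+s+1+r))) ≠ 0 :=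
          mul_ne_zero (mul_ne_zero (mul_ne_zero (mul_ne_zero ha' h1qL)
            (mul_ne_zero hqr hqr1)) hqs) (mul_ne_zero hA hA1)
        rw [div_sub_div _ _ hD1 hD2, div_eq_div_iff hD0 (mul_ne_zero hD1 hD2)]
        ring
    rw [Finset.sum_congr rfl claim, Finset.sum_range_sub' w (L+1)]
    rw [hw]
    simp only [if_pos (Nat.zero_le L), if_neg (by omega : ¬ L + 1 ≤ L)]
    simp

end
section
variable {q a : ℂ}

lemma alp_succ (k r : ℕ) : alp q a k r * (a^r * q^(r^2)) = alp q a (k+1) r := by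
  simp only [alp]
  rw [show (k+1)*r = k*r + r by ring,
    show (k+1)*r^2 + r*(r-1)/2 = (k*r^2 + r*(r-1)/2) + r^2 by ring, pow_add, pow_add]
  ring

lemma main_aux (hq1 : ‖q‖ < 1) (ha : a ≠ 1) (haq : ∀ n, qp q (a * q) n ≠ 0) :
    ∀ k L : ℕ, bet q a k L
      = ∑ r ∈ Finset.range (L+1), alp q a k r / (qp q q (L - r) * qp q (a*q) (L + r)) := by
  intro k
  induction k with
  | zero =>
    intro L
    rw [unit_bp hq1 ha haq L]
    simp only [bet]
  | succ k ih =>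
    intro L
    simp only [bet]
    have step1 : ∀ n ∈ Finset.range (L+1),
        a^n * q^(n^2) * bet q a k n / qp q q (L-n)
        = ∑ r ∈ Finset.Ico 0 (n+1),
            a^n * q^(n^2) * (alp q a k r / (qp q q (n-r) * qp q (a*q) (n+r))) / qp q q (L-n) := by
      intro n _
      rw [ih n, Finset.mul_sum, Finset.sum_div, Finset.range_eq_Ico]
    rw [Finset.sum_congr rfl step1, Finset.range_eq_Ico,
      ← Finset.sum_Ico_Ico_comm 0 (L+1)
        (fun r n => a^n * q^(n^2) * (alp q a k r / (qp q q (n-r) * qp q (a*q) (n+r)))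
          / qp q q (L-n))]
    apply Finset.sum_congr rfl
    intro r hr
    rw [Finset.mem_Ico] at hr
    have hrL : r ≤ L := by omega
    rw [Finset.sum_Ico_eq_sum_range, show L + 1 - r = (L - r) + 1 by omega]
    have inner_congr : ∀ m ∈ Finset.range ((L-r)+1),
        a^(r+m) * q^((r+m)^2) * (alp q a k r / (qp q q ((r+m)-r) * qp q (a*q) ((r+m)+r)))
          / qp q q (L-(r+m))
        = alp q a k r *
            (a^(r+m) * q^((r+m)^2) /
              (qp q q ((L-r) - m) * qp q q m * qp q (a*q) (2*r + m))) := by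
      intro m hm
      rw [Finset.mem_range] at hm
      rw [show (r+m) - r = m by omega, show (r+m) + r = 2*r + m by omega,
        show L - (r+m) = (L-r) - m by omega]
      simp only [div_eq_mul_inv, mul_inv]
      ring
    rw [Finset.sum_congr rfl inner_congr, ← Finset.mul_sum, durfee' hq1 haq r (L-r),
      show 2*r + (L-r) = L + r by omega, ← mul_div_assoc, alp_succ]

end
section
variable {q a : ℂ}

lemma ext_cons_zero {m : ℕ} (x : ℕ) (v : Fin m → ℕ) :
    ext (Fin.cons x v : Fin (m+1) → ℕ) 0 = x := by
  unfold ext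
  rw [dif_pos (Nat.succ_pos m)]
  exact @Fin.cons_zero m (fun _ => ℕ) x v

lemma ext_cons_succ {m : ℕ} (x : ℕ) (v : Fin m → ℕ) (i : ℕ) :
    ext (Fin.cons x v : Fin (m+1) → ℕ) (i+1) = ext v i := by
  unfold ext
  by_cases h : i < m
  · rw [dif_pos (by omega : i + 1 < m + 1), dif_pos h]
    exact @Fin.cons_succ m (fun _ => ℕ) x v ⟨i, h⟩
  · rw [dif_neg (by omega), dif_neg h]

lemma anti_bound {m : ℕ} {v : Fin m → ℕ}
    (hv : ∀ s t : Fin m, s ≤ t → v t ≤ v s) (i : Fin m) : v i ≤ ext v 0 := by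
  have hpos : 0 < m := i.pos
  unfold ext
  rw [dif_pos hpos]
  exact hv ⟨0, hpos⟩ i (by simp [Fin.le_def])

lemma anti_cons {m : ℕ} (x : ℕ) (v : Fin m → ℕ) :
    (∀ s t : Fin (m+1), s ≤ t →
        (Fin.cons x v : Fin (m+1) → ℕ) t ≤ (Fin.cons x v : Fin (m+1) → ℕ) s)
      ↔ ((∀ s t : Fin m, s ≤ t → v t ≤ v s) ∧ ext v 0 ≤ x) := by
  constructor
  · intro H
    refine ⟨fun s t hst => ?_, ?_⟩
    · have := H s.succ t.succ (Fin.succ_le_succ_iff.mpr hst)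
      simpa [Fin.cons_succ] using this
    · unfold ext
      by_cases h : 0 < m
      · rw [dif_pos h]
        have := H 0 (Fin.succ ⟨0, h⟩) (Fin.zero_le _)
        rw [Fin.cons_succ, Fin.cons_zero] at this
        exact this
      · rw [dif_neg h]
        exact Nat.zero_le x
  · rintro ⟨hv, h0⟩ s t hst
    induction s using Fin.cases with
    | zero =>
      induction t using Fin.cases with
      | zero => exact le_refl _
      | succ j =>
        rw [Fin.cons_succ, Fin.cons_zero]
        exact le_trans (anti_bound hv j) h0
    | succ i =>
      induction t using Fin.cases with
      | zero => exact absurd hst (by simp [Fin.le_def])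
      | succ j =>
        rw [Fin.cons_succ, Fin.cons_succ]
        exact hv i j (by rwa [Fin.succ_le_succ_iff] at hst)

lemma tsum_eq_bet (q a : ℂ) : ∀ (m L : ℕ),
    (∑' n : Fin m → ℕ,
        if (∀ s t : Fin m, s ≤ t → n t ≤ n s) ∧ ext n 0 ≤ L then
          a ^ (∑ s, n s) * q ^ (∑ s, (n s) ^ 2) /
            (qp q q (L - ext n 0) *
              ∏ i ∈ Finset.range m, qp q q (ext n i - ext n (i + 1)))
        else 0)
      = bet q a (m+1) L := by
  intro m
  induction m with
  | zero =>
    intro L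
    rw [tsum_eq_single (fun _ : Fin 0 => 0)
      (fun b hb => absurd (Subsingleton.elim b _) hb)]
    have hext : ext (fun _ : Fin 0 => (0:ℕ)) 0 = 0 := by simp [ext]
    rw [if_pos ⟨fun s _ _ => s.elim0, by rw [hext]; exact Nat.zero_le L⟩]
    simp only [bet, hext, Finset.prod_range_zero, mul_one, Nat.sub_zero,
      Finset.univ_eq_empty, Finset.sum_empty, pow_zero, one_mul]
    rw [Finset.sum_eq_single 0]
    · simp
    · intro b _ hb
      simp [hb]
    · intro h
      exact absurd (Finset.mem_range.mpr (by omega)) h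
  | succ m ihm =>
    intro L
    have hcons : ∀ (x : ℕ) (v : Fin m → ℕ),
        (if (∀ s t : Fin (m+1), s ≤ t →
              (Fin.cons x v : Fin (m+1) → ℕ) t ≤ (Fin.cons x v : Fin (m+1) → ℕ) s)
            ∧ ext (Fin.cons x v : Fin (m+1) → ℕ) 0 ≤ L then
          a ^ (∑ s, (Fin.cons x v : Fin (m+1) → ℕ) s) *
            q ^ (∑ s, ((Fin.cons x v : Fin (m+1) → ℕ) s)^2) /
            (qp q q (L - ext (Fin.cons x v : Fin (m+1) → ℕ) 0) *
              ∏ i ∈ Finset.range (m+1),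
                qp q q (ext (Fin.cons x v : Fin (m+1) → ℕ) i
                  - ext (Fin.cons x v : Fin (m+1) → ℕ) (i + 1)))
        else 0)
        = (if x ≤ L then a^x * q^(x^2) / qp q q (L - x) else 0) *
          (if (∀ s t : Fin m, s ≤ t → v t ≤ v s) ∧ ext v 0 ≤ x then
            a ^ (∑ s, v s) * q ^ (∑ s, (v s)^2) /
              (qp q q (x - ext v 0) *
                ∏ i ∈ Finset.range m, qp q q (ext v i - ext v (i + 1)))
          else 0) := by
      intro x v
      rw [ext_cons_zero]
      simp only [anti_cons]
      by_cases hxL : x ≤ L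
      · by_cases hcond : (∀ s t : Fin m, s ≤ t → v t ≤ v s) ∧ ext v 0 ≤ x
        · rw [if_pos ⟨hcond, hxL⟩, if_pos hxL, if_pos hcond]
          have hsum : (∑ s, (Fin.cons x v : Fin (m+1) → ℕ) s) = x + ∑ s, v s := by
            rw [Fin.sum_univ_succ]
            simp [Fin.cons_succ]
          have hsumsq : (∑ s, ((Fin.cons x v : Fin (m+1) → ℕ) s)^2)
              = x^2 + ∑ s, (v s)^2 := by
            rw [Fin.sum_univ_succ]
            simp [Fin.cons_succ]
          have hprod : (∏ i ∈ Finset.range (m+1),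
              qp q q (ext (Fin.cons x v : Fin (m+1) → ℕ) i
                - ext (Fin.cons x v : Fin (m+1) → ℕ) (i + 1)))
              = (∏ i ∈ Finset.range m, qp q q (ext v i - ext v (i + 1)))
                  * qp q q (x - ext v 0) := by
            rw [Finset.prod_range_succ']
            congr 1
            · apply Finset.prod_congr rfl
              intro i _
              rw [ext_cons_succ, ext_cons_succ]
            · rw [ext_cons_zero, ext_cons_succ]
          rw [hsum, hsumsq, hprod, pow_add, pow_add, div_mul_div_comm]
          congr 1
          · ring
          · ring
        · rw [if_neg (fun h => hcond h.1), if_neg hcond, mul_zero]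
      · rw [if_neg (fun h => hxL h.2), if_neg hxL, zero_mul]
    rw [← Equiv.tsum_eq (Fin.consEquiv fun _ : Fin (m+1) => ℕ)]
    have hec : ∀ (p : ℕ × (Fin m → ℕ)),
        (Fin.consEquiv fun _ : Fin (m+1) => ℕ) p = Fin.cons p.1 p.2 := fun _ => rfl
    have hs1 : Summable (fun p : ℕ × (Fin m → ℕ) =>
        (if (∀ s t : Fin (m+1), s ≤ t →
              ((Fin.consEquiv fun _ : Fin (m+1) => ℕ) p) t
                ≤ ((Fin.consEquiv fun _ : Fin (m+1) => ℕ) p) s)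
            ∧ ext ((Fin.consEquiv fun _ : Fin (m+1) => ℕ) p) 0 ≤ L then
          a ^ (∑ s, ((Fin.consEquiv fun _ : Fin (m+1) => ℕ) p) s) *
            q ^ (∑ s, (((Fin.consEquiv fun _ : Fin (m+1) => ℕ) p) s)^2) /
            (qp q q (L - ext ((Fin.consEquiv fun _ : Fin (m+1) => ℕ) p) 0) *
              ∏ i ∈ Finset.range (m+1),
                qp q q (ext ((Fin.consEquiv fun _ : Fin (m+1) => ℕ) p) i
                  - ext ((Fin.consEquiv fun _ : Fin (m+1) => ℕ) p) (i + 1)))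
        else 0)) := by
      apply summable_of_ne_finset_zero
        (s := Finset.range (L+1) ×ˢ Fintype.piFinset fun _ : Fin m => Finset.range (L+1))
      intro p hp
      rw [hec p, hcons p.1 p.2]
      by_cases h1 : p.1 ≤ L
      · by_cases h2 : (∀ s t : Fin m, s ≤ t → p.2 t ≤ p.2 s) ∧ ext p.2 0 ≤ p.1
        · exfalso
          apply hp
          rw [Finset.mem_product]
          refine ⟨Finset.mem_range.mpr (by omega), Fintype.mem_piFinset.mpr fun i => ?_⟩
          have := le_trans (anti_bound h2.1 i) h2.2
          exact Finset.mem_range.mpr (by omega)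
        · rw [if_neg h2, mul_zero]
      · rw [if_neg h1, zero_mul]
    have hs2 : ∀ b : ℕ, Summable (fun c : Fin m → ℕ =>
        (if (∀ s t : Fin (m+1), s ≤ t →
              ((Fin.consEquiv fun _ : Fin (m+1) => ℕ) (b, c)) t
                ≤ ((Fin.consEquiv fun _ : Fin (m+1) => ℕ) (b, c)) s)
            ∧ ext ((Fin.consEquiv fun _ : Fin (m+1) => ℕ) (b, c)) 0 ≤ L then
          a ^ (∑ s, ((Fin.consEquiv fun _ : Fin (m+1) => ℕ) (b, c)) s) *
            q ^ (∑ s, (((Fin.consEquiv fun _ : Fin (m+1) => ℕ) (b, c)) s)^2) /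
            (qp q q (L - ext ((Fin.consEquiv fun _ : Fin (m+1) => ℕ) (b, c)) 0) *
              ∏ i ∈ Finset.range (m+1),
                qp q q (ext ((Fin.consEquiv fun _ : Fin (m+1) => ℕ) (b, c)) i
                  - ext ((Fin.consEquiv fun _ : Fin (m+1) => ℕ) (b, c)) (i + 1)))
        else 0)) := by
      intro b
      apply summable_of_ne_finset_zero
        (s := Fintype.piFinset fun _ : Fin m => Finset.range (b+1))
      intro c hc
      rw [hec (b, c), hcons b c]
      by_cases h2 : (∀ s t : Fin m, s ≤ t → c t ≤ c s) ∧ ext c 0 ≤ b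
      · exfalso
        apply hc
        refine Fintype.mem_piFinset.mpr fun i => ?_
        have := le_trans (anti_bound h2.1 i) h2.2
        exact Finset.mem_range.mpr (by omega)
      · rw [if_neg h2, mul_zero]
    rw [Summable.tsum_prod' hs1 hs2]
    have inner : ∀ b : ℕ,
        (∑' c : Fin m → ℕ,
          (if (∀ s t : Fin (m+1), s ≤ t →
                ((Fin.consEquiv fun _ : Fin (m+1) => ℕ) (b, c)) t
                  ≤ ((Fin.consEquiv fun _ : Fin (m+1) => ℕ) (b, c)) s)
              ∧ ext ((Fin.consEquiv fun _ : Fin (m+1) => ℕ) (b, c)) 0 ≤ L then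
            a ^ (∑ s, ((Fin.consEquiv fun _ : Fin (m+1) => ℕ) (b, c)) s) *
              q ^ (∑ s, (((Fin.consEquiv fun _ : Fin (m+1) => ℕ) (b, c)) s)^2) /
              (qp q q (L - ext ((Fin.consEquiv fun _ : Fin (m+1) => ℕ) (b, c)) 0) *
                ∏ i ∈ Finset.range (m+1),
                  qp q q (ext ((Fin.consEquiv fun _ : Fin (m+1) => ℕ) (b, c)) i
                    - ext ((Fin.consEquiv fun _ : Fin (m+1) => ℕ) (b, c)) (i + 1)))
          else 0))
        = (if b ≤ L then a^b * q^(b^2) / qp q q (L - b) else 0) * bet q a (m+1) b := by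
      intro b
      have : ∀ c : Fin m → ℕ,
          (if (∀ s t : Fin (m+1), s ≤ t →
                ((Fin.consEquiv fun _ : Fin (m+1) => ℕ) (b, c)) t
                  ≤ ((Fin.consEquiv fun _ : Fin (m+1) => ℕ) (b, c)) s)
              ∧ ext ((Fin.consEquiv fun _ : Fin (m+1) => ℕ) (b, c)) 0 ≤ L then
            a ^ (∑ s, ((Fin.consEquiv fun _ : Fin (m+1) => ℕ) (b, c)) s) *
              q ^ (∑ s, (((Fin.consEquiv fun _ : Fin (m+1) => ℕ) (b, c)) s)^2) /
              (qp q q (L - ext ((Fin.consEquiv fun _ : Fin (m+1) => ℕ) (b, c)) 0) *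
                ∏ i ∈ Finset.range (m+1),
                  qp q q (ext ((Fin.consEquiv fun _ : Fin (m+1) => ℕ) (b, c)) i
                    - ext ((Fin.consEquiv fun _ : Fin (m+1) => ℕ) (b, c)) (i + 1)))
          else 0)
          = (if b ≤ L then a^b * q^(b^2) / qp q q (L - b) else 0) *
            (if (∀ s t : Fin m, s ≤ t → c t ≤ c s) ∧ ext c 0 ≤ b then
              a ^ (∑ s, c s) * q ^ (∑ s, (c s)^2) /
                (qp q q (b - ext c 0) *
                  ∏ i ∈ Finset.range m, qp q q (ext c i - ext c (i + 1)))
            else 0) := by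
        intro c
        rw [hec (b, c)]
        exact hcons b c
      rw [tsum_congr this, tsum_mul_left, ihm b]
    rw [tsum_congr inner]
    rw [tsum_eq_sum (s := Finset.range (L+1)) (by
      intro b hb
      rw [Finset.mem_range] at hb
      rw [if_neg (by omega), zero_mul])]
    show _ = bet q a (m+1+1) L
    simp only [bet]
    apply Finset.sum_congr rfl
    intro n hn
    rw [Finset.mem_range] at hn
    rw [if_pos (by omega : n ≤ L), div_mul_eq_mul_div]

end

/-- the `k`-fold iterated Bailey pair relative to `a`. -/
theorem iterated_bailey_pair (q a : ℂ) (hq0 : 0 < ‖q‖) (hq1 : ‖q‖ < 1) (ha : a ≠ 1)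
    (haq : ∀ n, qp q (a * q) n ≠ 0) (k : ℕ) (hk : 2 ≤ k) (L : ℕ) :
    (∑' n : Fin (k - 1) → ℕ,
        if (∀ s t : Fin (k - 1), s ≤ t → n t ≤ n s) ∧ ext n 0 ≤ L then
          a ^ (∑ s, n s) * q ^ (∑ s, (n s) ^ 2) /
            (qp q q (L - ext n 0) *
              ∏ i ∈ Finset.range (k - 1), qp q q (ext n i - ext n (i + 1)))
        else 0) =
      ∑ r ∈ Finset.range (L + 1),
        ((-1) ^ r * a ^ (k * r) * q ^ (k * r ^ 2 + r * (r - 1) / 2) *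
            (1 - a * q ^ (2 * r)) * qp q a r / ((1 - a) * qp q q r)) /
          (qp q q (L - r) * qp q (a * q) (L + r)) := by
  obtain ⟨m, rfl⟩ : ∃ m, k = m + 2 := ⟨k - 2, by omega⟩
  have h2 : bet q a (m+2) L
      = ∑ r ∈ Finset.range (L + 1),
        ((-1) ^ r * a ^ ((m+2) * r) * q ^ ((m+2) * r ^ 2 + r * (r - 1) / 2) *
            (1 - a * q ^ (2 * r)) * qp q a r / ((1 - a) * qp q q r)) /
          (qp q q (L - r) * qp q (a * q) (L + r)) := by
    rw [main_aux hq1 ha haq (m+2) L]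
    apply Finset.sum_congr rfl
    intro r _
    simp only [alp]
  exact (tsum_eq_bet q a (m+1) L).trans h2
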